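/- Corollary of Neveu's inequality: let q ∈ (1,2] and let X₁,…,X_n be independent nonnegative random variables with finite q-th moments. Then E[(Σᵢ Xᵢ)^q] ≤ (Σᵢ E[Xᵢ])^q + Σᵢ E[Xᵢ^q]. -/

import Mathlib

open MeasureTheory ProbabilityTheory Real

lemma nv_meas_rpow {Ω : Type*} [MeasurableSpace Ω] {f : Ω → ℝ} (hm : Measurable f)
    {p : ℝ} (hp : 0 ≤ p) : Measurable fun ω => f ω ^ p :=
  (Real.continuous_rpow_const hp).measurable.comp hm

/-- Subadditivity of `x ^ p` for `0 ≤ p ≤ 1` on nonnegative reals. -/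
lemma nv_rpow_add_le {x y p : ℝ} (hx : 0 ≤ x) (hy : 0 ≤ y) (hp0 : 0 ≤ p) (hp1 : p ≤ 1) :
    (x + y) ^ p ≤ x ^ p + y ^ p := by
  lift x to NNReal using hx
  lift y to NNReal using hy
  have := NNReal.rpow_add_le_add_rpow x y hp0 hp1
  have h2 : ((x + y : NNReal) : ℝ) ^ p ≤ ((x ^ p + y ^ p : NNReal) : ℝ) := by
    rw [← NNReal.coe_rpow]
    exact_mod_cast this
  simpa [NNReal.coe_rpow] using h2

/-- Convex Bernoulli: `a ^ q + q * a ^ (q-1) * b ≤ (a + b) ^ q` for `1 < q`, `a, b ≥ 0`. -/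
lemma nv_bernoulli_lower {a b q : ℝ} (ha : 0 ≤ a) (hb : 0 ≤ b) (hq : 1 < q) :
    a ^ q + q * a ^ (q - 1) * b ≤ (a + b) ^ q := by
  rcases eq_or_lt_of_le ha with rfl | ha'
  · rw [Real.zero_rpow (by linarith : (0:ℝ) < q).ne', Real.zero_rpow (by linarith : (0:ℝ) < q - 1).ne']
    simpa using Real.rpow_nonneg hb q
  · have hs : -1 ≤ b / a := le_trans (by norm_num) (div_nonneg hb ha)
    have h := one_add_mul_self_le_rpow_one_add hs hq.le
    have key : a ^ q * (1 + q * (b / a)) ≤ a ^ q * (1 + b / a) ^ q :=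
      mul_le_mul_of_nonneg_left h (Real.rpow_nonneg ha q)
    have h1 : a ^ q * (1 + b / a) ^ q = (a + b) ^ q := by
      rw [← Real.mul_rpow ha (by positivity)]
      rw [mul_add, mul_one, mul_div_cancel₀ _ ha'.ne']
    have h2 : a ^ q * (1 + q * (b / a)) = a ^ q + q * a ^ (q - 1) * b := by
      have haq : a ^ q = a ^ (q - 1) * a := by
        rw [← Real.rpow_add_one ha'.ne']; ring_nf
      have hb' : a * (b / a) = b := mul_div_cancel₀ b ha'.ne'
      rw [haq]; linear_combination (q * a ^ (q - 1)) * hb'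
    rw [h1] at key; rw [h2] at key; exact key

/-- Concave Bernoulli / tangent line: `x ^ p ≤ c ^ p + p * c ^ (p-1) * (x - c)`. -/
lemma nv_tangent {x c p : ℝ} (hx : 0 ≤ x) (hc : 0 < c) (hp0 : 0 < p) (hp1 : p ≤ 1) :
    x ^ p ≤ c ^ p + p * c ^ (p - 1) * (x - c) := by
  have hs : -1 ≤ x / c - 1 := by
    have : 0 ≤ x / c := by positivity
    linarith
  have h := rpow_one_add_le_one_add_mul_self hs hp0.le hp1
  have h' : (x / c) ^ p ≤ 1 + p * (x / c - 1) := by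
    simpa using h
  have key : c ^ p * (x / c) ^ p ≤ c ^ p * (1 + p * (x / c - 1)) :=
    mul_le_mul_of_nonneg_left h' (Real.rpow_nonneg hc.le p)
  have h1 : c ^ p * (x / c) ^ p = x ^ p := by
    rw [← Real.mul_rpow hc.le (by positivity), mul_div_cancel₀ _ hc.ne']
  have h2 : c ^ p * (1 + p * (x / c - 1)) = c ^ p + p * c ^ (p - 1) * (x - c) := by
    have hcp : c ^ p = c ^ (p - 1) * c := by
      rw [← Real.rpow_add_one hc.ne']; ring_nf
    have hx' : c * (x / c) = x := mul_div_cancel₀ x hc.ne'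
    rw [hcp]; linear_combination (p * c ^ (p - 1)) * hx'
  rw [h1, h2] at key; exact key

/-- Key pointwise inequality: for `1 < q ≤ 2`, `a, b ≥ 0`:
`(a+b)^q ≤ a^q + q * a^(q-1) * b + b^q`. -/
lemma nv_key_ineq {a b q : ℝ} (ha : 0 ≤ a) (hb : 0 ≤ b) (hq1 : 1 < q) (hq2 : q ≤ 2) :
    (a + b) ^ q ≤ a ^ q + q * a ^ (q - 1) * b + b ^ q := by
  set p := q - 1 with hp
  have hp0 : 0 < p := by simp [hp]; linarith
  have hp1 : p ≤ 1 := by simp [hp]; linarith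
  -- (a+b)^q - a^q = q * ∫_0^b (a+s)^p ds
  have hcont : ContinuousOn (fun s : ℝ => (a + s) ^ p) (Set.uIcc 0 b) :=
    (continuous_const.add continuous_id).continuousOn.rpow_const
      (fun x _ => Or.inr hp0.le)
  have hcont2 : ContinuousOn (fun s : ℝ => a ^ p + s ^ p) (Set.uIcc 0 b) :=
    continuousOn_const.add ((Real.continuous_rpow_const hp0.le).continuousOn)
  have hint1 : IntervalIntegrable (fun s : ℝ => (a + s) ^ p) MeasureTheory.volume 0 b :=
    hcont.intervalIntegrable
  have hint2 : IntervalIntegrable (fun s : ℝ => a ^ p + s ^ p) MeasureTheory.volume 0 b :=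
    hcont2.intervalIntegrable
  have heq1 : (∫ s in (0:ℝ)..b, (a + s) ^ p) = ((a + b) ^ q - a ^ q) / q := by
    rw [intervalIntegral.integral_comp_add_left (fun t => t ^ p) a]
    rw [integral_rpow (Or.inl (by linarith : (-1:ℝ) < p))]
    have : p + 1 = q := by simp [hp]
    rw [this]
    simp [add_comm]
  have heq2 : (∫ s in (0:ℝ)..b, (a ^ p + s ^ p)) = a ^ p * b + b ^ q / q := by
    rw [intervalIntegral.integral_add intervalIntegrable_const
      ((Real.continuous_rpow_const hp0.le).continuousOn.intervalIntegrable)]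
    rw [integral_rpow (Or.inl (by linarith : (-1:ℝ) < p))]
    have hpq : p + 1 = q := by simp [hp]
    rw [hpq, Real.zero_rpow (by linarith : q ≠ 0)]
    simp [mul_comm]
  have hmono : (∫ s in (0:ℝ)..b, (a + s) ^ p) ≤ ∫ s in (0:ℝ)..b, (a ^ p + s ^ p) := by
    apply intervalIntegral.integral_mono_on hb hint1 hint2
    intro s hs
    exact nv_rpow_add_le ha hs.1 hp0.le hp1
  rw [heq1, heq2] at hmono
  have hq0 : 0 < q := by linarith
  have := (div_le_iff₀ hq0).mp hmono
  have hexp : q * (b ^ q / q) = b ^ q := by field_simp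
  nlinarith [this]

/-- Jensen: for a probability measure, `∫ f^p ≤ (∫ f)^p` when `0 < p ≤ 1`, `f ≥ 0`. -/
lemma nv_jensen {Ω : Type*} [MeasurableSpace Ω] (μ : Measure Ω) [IsProbabilityMeasure μ]
    {f : Ω → ℝ} (hm : Measurable f) (h0 : ∀ ω, 0 ≤ f ω) (hint : Integrable f μ)
    {p : ℝ} (hp0 : 0 < p) (hp1 : p ≤ 1) :
    ∫ ω, f ω ^ p ∂μ ≤ (∫ ω, f ω ∂μ) ^ p := by
  have hfp_int : Integrable (fun ω => f ω ^ p) μ := by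
    apply Integrable.mono' (g := fun ω => 1 + f ω) (integrable_const 1 |>.add hint)
      ((nv_meas_rpow hm hp0.le).aestronglyMeasurable)
    filter_upwards with ω
    rw [Real.norm_of_nonneg (Real.rpow_nonneg (h0 ω) p)]
    rcases le_or_gt (f ω) 1 with h | h
    · have : f ω ^ p ≤ 1 := Real.rpow_le_one (h0 ω) h hp0.le
      linarith [h0 ω]
    · have : f ω ^ p ≤ f ω ^ (1:ℝ) :=
        Real.rpow_le_rpow_of_exponent_le h.le hp1
      rw [Real.rpow_one] at this; linarith
  set c := ∫ ω, f ω ∂μ with hc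
  have hc0 : 0 ≤ c := integral_nonneg h0
  rcases eq_or_lt_of_le hc0 with hceq | hcpos
  · have hf0 : f =ᵐ[μ] 0 := by
      rw [← integral_eq_zero_iff_of_nonneg h0 hint]
      exact hceq.symm
    have : (fun ω => f ω ^ p) =ᵐ[μ] 0 := by
      filter_upwards [hf0] with ω hω
      simp [hω, Real.zero_rpow hp0.ne']
    rw [integral_congr_ae this]
    simp [← hceq, Real.zero_rpow hp0.ne']
  · have htan : ∀ ω, f ω ^ p ≤ c ^ p + p * c ^ (p - 1) * (f ω - c) :=
      fun ω => nv_tangent (h0 ω) hcpos hp0 hp1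
    calc ∫ ω, f ω ^ p ∂μ
        ≤ ∫ ω, (c ^ p + p * c ^ (p - 1) * (f ω - c)) ∂μ := by
          have h2 : Integrable (fun ω => p * c ^ (p - 1) * (f ω - c)) μ := by
            exact (hint.sub (integrable_const c)).const_mul _
          exact integral_mono hfp_int ((integrable_const _).add h2) htan
      _ = c ^ p := by
          have h2 : Integrable (fun ω => p * c ^ (p - 1) * (f ω - c)) μ := by
            exact (hint.sub (integrable_const c)).const_mul _
          have e1 : ∫ ω, (c ^ p + p * c ^ (p - 1) * (f ω - c)) ∂μ
              = (∫ _ω, (c ^ p) ∂μ) + ∫ ω, p * c ^ (p - 1) * (f ω - c) ∂μ :=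
            integral_add (integrable_const _) h2
          have e2 : ∫ ω, p * c ^ (p - 1) * (f ω - c) ∂μ
              = p * c ^ (p - 1) * ∫ ω, (f ω - c) ∂μ := integral_const_mul _ _
          have e3 : ∫ ω, (f ω - c) ∂μ = (∫ ω, f ω ∂μ) - ∫ _ω, (c:ℝ) ∂μ :=
            integral_sub hint (integrable_const c)
          rw [e1, e2, e3]
          simp [← hc]

/-- Each `X i` is integrable since `x ≤ 1 + x^q`. -/
lemma nv_integrable_of_rpow {Ω : Type*} [MeasurableSpace Ω] (μ : Measure Ω)
    [IsProbabilityMeasure μ] {f : Ω → ℝ} (hm : Measurable f) (h0 : ∀ ω, 0 ≤ f ω)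
    {q : ℝ} (hq : 1 < q) (hint : Integrable (fun ω => f ω ^ q) μ) :
    Integrable f μ := by
  apply Integrable.mono' (g := fun ω => 1 + f ω ^ q) ((integrable_const 1).add hint)
    hm.aestronglyMeasurable
  filter_upwards with ω
  rw [Real.norm_of_nonneg (h0 ω)]
  rcases le_or_gt (f ω) 1 with h | h
  · have : 0 ≤ f ω ^ q := Real.rpow_nonneg (h0 ω) q
    linarith
  · have h1 : f ω ^ (1:ℝ) ≤ f ω ^ q := Real.rpow_le_rpow_of_exponent_le h.le hq.le
    rw [Real.rpow_one] at h1; linarith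

/-- `(a + b)^q ≤ 2^q * (a^q + b^q)` for nonneg `a b` and `0 ≤ q`. -/
lemma nv_rpow_add_le_two {a b q : ℝ} (ha : 0 ≤ a) (hb : 0 ≤ b) (hq : 0 ≤ q) :
    (a + b) ^ q ≤ 2 ^ q * (a ^ q + b ^ q) := by
  have h1 : a + b ≤ 2 * max a b := by
    rcases max_cases a b with ⟨h, h'⟩ | ⟨h, h'⟩ <;> rw [h] <;> linarith
  have h2 : (a + b) ^ q ≤ (2 * max a b) ^ q :=
    Real.rpow_le_rpow (by linarith) h1 hq
  have h3 : (2 * max a b) ^ q = 2 ^ q * (max a b) ^ q :=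
    Real.mul_rpow (by norm_num) (le_max_of_le_left ha)
  have h4 : (max a b) ^ q ≤ a ^ q + b ^ q := by
    rcases max_cases a b with ⟨h, _⟩ | ⟨h, _⟩ <;> rw [h]
    · nlinarith [Real.rpow_nonneg hb q]
    · nlinarith [Real.rpow_nonneg ha q]
  calc (a + b) ^ q ≤ 2 ^ q * (max a b) ^ q := h3 ▸ h2
    _ ≤ 2 ^ q * (a ^ q + b ^ q) := by
        have : (0:ℝ) ≤ 2 ^ q := Real.rpow_nonneg (by norm_num) q
        nlinarith

/-- Integrability of `(∑ i in s, X i)^q`. -/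
lemma nv_sum_rpow_integrable {Ω : Type*} [MeasurableSpace Ω] (μ : Measure Ω)
    [IsProbabilityMeasure μ] {ι : Type*} (X : ι → Ω → ℝ) (hXm : ∀ i, Measurable (X i))
    (hX0 : ∀ i ω, 0 ≤ X i ω) {q : ℝ} (hq : 1 < q)
    (hXq : ∀ i, Integrable (fun ω => X i ω ^ q) μ) (s : Finset ι) :
    Integrable (fun ω => (∑ i ∈ s, X i ω) ^ q) μ := by
  classical
  induction s using Finset.induction_on with
  | empty => simp [Real.zero_rpow (by linarith : q ≠ 0)]
  | insert a s ha ih =>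
    have hSmeas : Measurable (fun ω => ∑ i ∈ s, X i ω) := by
      exact Finset.measurable_sum s fun i _ => hXm i
    have hS0 : ∀ ω, 0 ≤ ∑ i ∈ s, X i ω := fun ω => Finset.sum_nonneg fun i _ => hX0 i ω
    have hmeas : Measurable (fun ω => (X a ω + ∑ i ∈ s, X i ω) ^ q) :=
      nv_meas_rpow ((hXm a).add hSmeas) (by linarith)
    apply Integrable.mono'
      (g := fun ω => 2 ^ q * (X a ω ^ q + (∑ i ∈ s, X i ω) ^ q))
      (((hXq a).add ih).const_mul _)
    · have : (fun ω => (∑ i ∈ insert a s, X i ω) ^ q)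
          = fun ω => (X a ω + ∑ i ∈ s, X i ω) ^ q := by
        funext ω; rw [Finset.sum_insert ha]
      rw [this]
      exact hmeas.aestronglyMeasurable
    · filter_upwards with ω
      rw [Finset.sum_insert ha,
        Real.norm_of_nonneg (Real.rpow_nonneg (add_nonneg (hX0 a ω) (hS0 ω)) q)]
      exact nv_rpow_add_le_two (hX0 a ω) (hS0 ω) (by linarith)

theorem neveu_corollary {Ω : Type*} [MeasurableSpace Ω] (μ : Measure Ω)
    [IsProbabilityMeasure μ] (q : ℝ) (hq1 : 1 < q) (hq2 : q ≤ 2)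
    (n : ℕ) (X : Fin n → Ω → ℝ) (hXm : ∀ i, Measurable (X i))
    (hX0 : ∀ i ω, 0 ≤ X i ω)
    (hXq : ∀ i, Integrable (fun ω => X i ω ^ q) μ)
    (hindep : iIndepFun X μ) :
    ∫ ω, (∑ i, X i ω) ^ q ∂μ ≤
      (∑ i, ∫ ω, X i ω ∂μ) ^ q + ∑ i, ∫ ω, X i ω ^ q ∂μ := by
  classical
  have hXint : ∀ i, Integrable (X i) μ :=
    fun i => nv_integrable_of_rpow μ (hXm i) (hX0 i) hq1 (hXq i)
  suffices H : ∀ s : Finset (Fin n),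
      ∫ ω, (∑ i ∈ s, X i ω) ^ q ∂μ ≤
        (∑ i ∈ s, ∫ ω, X i ω ∂μ) ^ q + ∑ i ∈ s, ∫ ω, X i ω ^ q ∂μ by
    exact H Finset.univ
  intro s
  induction s using Finset.induction_on with
  | empty =>
    simp [Real.zero_rpow (by linarith : q ≠ 0)]
  | insert a s ha ih =>
    set p := q - 1 with hp
    have hp0 : 0 < p := by simp [hp]; linarith
    have hp1 : p ≤ 1 := by simp [hp]; linarith
    set S := fun ω => ∑ i ∈ s, X i ω with hSdef
    have hSmeas : Measurable S := Finset.measurable_sum s fun i _ => hXm i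
    have hS0 : ∀ ω, 0 ≤ S ω := fun ω => Finset.sum_nonneg fun i _ => hX0 i ω
    have hSint : Integrable S μ := integrable_finset_sum s fun i _ => hXint i
    have hSq_int : Integrable (fun ω => S ω ^ q) μ :=
      nv_sum_rpow_integrable μ X hXm hX0 hq1 hXq s
    have hSp_int : Integrable (fun ω => S ω ^ p) μ := by
      apply Integrable.mono' (g := fun ω => 1 + S ω) ((integrable_const 1).add hSint)
        (nv_meas_rpow hSmeas hp0.le).aestronglyMeasurable
      filter_upwards with ω
      rw [Real.norm_of_nonneg (Real.rpow_nonneg (hS0 ω) p)]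
      rcases le_or_gt (S ω) 1 with h | h
      · have : S ω ^ p ≤ 1 := Real.rpow_le_one (hS0 ω) h hp0.le
        linarith [hS0 ω]
      · have h1 : S ω ^ p ≤ S ω ^ (1:ℝ) := Real.rpow_le_rpow_of_exponent_le h.le hp1
        rw [Real.rpow_one] at h1; linarith
    -- independence of S and X a
    have hindepS : IndepFun S (X a) μ := by
      have := hindep.indepFun_finsetSum_of_notMem hXm ha
      have heq : (∑ j ∈ s, X j) = S := by
        funext ω; simp [hSdef]
      rwa [heq] at this
    have hindepSp : IndepFun (fun ω => S ω ^ p) (X a) μ := by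
      have := hindepS.comp (φ := fun x : ℝ => x ^ p) (ψ := id)
        (Real.continuous_rpow_const hp0.le).measurable measurable_id
      exact this
    have hprod_int : Integrable (fun ω => S ω ^ p * X a ω) μ :=
      hindepSp.integrable_mul hSp_int (hXint a)
    have hfull_int : Integrable (fun ω => (X a ω + S ω) ^ q) μ := by
      have := nv_sum_rpow_integrable μ X hXm hX0 hq1 hXq (insert a s)
      convert this using 1
      funext ω; rw [Finset.sum_insert ha]
    -- Step 1: pointwise inequality, integrated
    have step1 : ∫ ω, (X a ω + S ω) ^ q ∂μ ≤
        ∫ ω, S ω ^ q ∂μ + q * ∫ ω, S ω ^ p * X a ω ∂μ + ∫ ω, X a ω ^ q ∂μ := by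
      have hrhs_int : Integrable
          (fun ω => S ω ^ q + q * (S ω ^ p * X a ω) + X a ω ^ q) μ :=
        (hSq_int.add (hprod_int.const_mul q)).add (hXq a)
      calc ∫ ω, (X a ω + S ω) ^ q ∂μ
          ≤ ∫ ω, (S ω ^ q + q * (S ω ^ p * X a ω) + X a ω ^ q) ∂μ := by
            apply integral_mono hfull_int hrhs_int
            intro ω
            show (X a ω + S ω) ^ q ≤ _
            have := nv_key_ineq (hS0 ω) (hX0 a ω) hq1 hq2
            rw [add_comm (X a ω) (S ω)]
            calc (S ω + X a ω) ^ q ≤ S ω ^ q + q * S ω ^ (q-1) * X a ω + X a ω ^ q := this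
              _ = S ω ^ q + q * (S ω ^ p * X a ω) + X a ω ^ q := by rw [← hp]; ring
        _ = ∫ ω, S ω ^ q ∂μ + q * ∫ ω, S ω ^ p * X a ω ∂μ + ∫ ω, X a ω ^ q ∂μ := by
            have e1 : ∫ ω, (S ω ^ q + q * (S ω ^ p * X a ω) + X a ω ^ q) ∂μ
                = (∫ ω, (S ω ^ q + q * (S ω ^ p * X a ω)) ∂μ) + ∫ ω, X a ω ^ q ∂μ :=
              integral_add (hSq_int.add (hprod_int.const_mul q)) (hXq a)
            have e2 : ∫ ω, (S ω ^ q + q * (S ω ^ p * X a ω)) ∂μ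
                = (∫ ω, S ω ^ q ∂μ) + ∫ ω, q * (S ω ^ p * X a ω) ∂μ :=
              integral_add hSq_int (hprod_int.const_mul q)
            have e3 : ∫ ω, q * (S ω ^ p * X a ω) ∂μ
                = q * ∫ ω, S ω ^ p * X a ω ∂μ := integral_const_mul _ _
            rw [e1, e2, e3]
    -- Step 2: independence factors the product
    have step2 : ∫ ω, S ω ^ p * X a ω ∂μ = (∫ ω, S ω ^ p ∂μ) * ∫ ω, X a ω ∂μ :=
      hindepSp.integral_fun_mul_eq_mul_integral hSp_int.aestronglyMeasurable (hXint a).aestronglyMeasurable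
    -- Step 3: Jensen
    have step3 : ∫ ω, S ω ^ p ∂μ ≤ (∫ ω, S ω ∂μ) ^ p :=
      nv_jensen μ hSmeas hS0 hSint hp0 hp1
    -- abbreviations
    set ES := ∫ ω, S ω ∂μ with hES
    set Ea := ∫ ω, X a ω ∂μ with hEa
    have hES0 : 0 ≤ ES := integral_nonneg hS0
    have hEa0 : 0 ≤ Ea := integral_nonneg (hX0 a)
    -- Step 5: convex Bernoulli
    have step5 : ES ^ q + q * ES ^ p * Ea ≤ (ES + Ea) ^ q := by
      have := nv_bernoulli_lower hES0 hEa0 hq1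
      rw [← hp] at this; exact this
    -- combine
    have hsum_insert : (fun ω => (∑ i ∈ insert a s, X i ω) ^ q)
        = fun ω => (X a ω + S ω) ^ q := by
      funext ω; rw [Finset.sum_insert ha]
    rw [hsum_insert]
    rw [Finset.sum_insert ha, Finset.sum_insert ha]
    have hEp0 : 0 ≤ (∫ ω, S ω ^ p ∂μ) :=
      integral_nonneg fun ω => Real.rpow_nonneg (hS0 ω) p
    have h3' : q * (∫ ω, S ω ^ p ∂μ) * Ea ≤ q * ES ^ p * Ea := by
      have hq0 : (0:ℝ) ≤ q := by linarith
      exact mul_le_mul_of_nonneg_right (mul_le_mul_of_nonneg_left step3 hq0) hEa0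
    have hESeq : ES = ∑ i ∈ s, ∫ ω, X i ω ∂μ := by
      rw [hES, hSdef]
      rw [integral_finset_sum s fun i _ => hXint i]
    have hIH : ∫ ω, S ω ^ q ∂μ ≤ ES ^ q + ∑ i ∈ s, ∫ ω, X i ω ^ q ∂μ := by
      rw [hESeq]; exact ih
    calc ∫ ω, (X a ω + S ω) ^ q ∂μ
        ≤ ∫ ω, S ω ^ q ∂μ + q * ((∫ ω, S ω ^ p ∂μ) * Ea) + ∫ ω, X a ω ^ q ∂μ := by
          rw [← step2]; exact step1
      _ ≤ ES ^ q + ∑ i ∈ s, ∫ ω, X i ω ^ q ∂μ + q * ES ^ p * Ea + ∫ ω, X a ω ^ q ∂μ := by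
          have : q * ((∫ ω, S ω ^ p ∂μ) * Ea) ≤ q * ES ^ p * Ea := by
            rw [← mul_assoc]; exact h3'
          linarith
      _ ≤ (ES + Ea) ^ q + ∑ i ∈ s, ∫ ω, X i ω ^ q ∂μ + ∫ ω, X a ω ^ q ∂μ := by
          linarith
      _ = (Ea + ∑ i ∈ s, ∫ ω, X i ω ∂μ) ^ q
          + (∫ ω, X a ω ^ q ∂μ + ∑ i ∈ s, ∫ ω, X i ω ^ q ∂μ) := by
          rw [hESeq, add_comm (∑ i ∈ s, ∫ ω, X i ω ∂μ) Ea]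
          ring
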